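/- arXiv:1710.04572 — 7 statements merged into one kernel-verified Lean document; each statement's English description precedes it below -/
import Mathlib

section
/- Let λ ∈ ℝ and α, β > 0. Then the system of equations 1 − λ + α√(ab) − β(a+b)/(2ab) = 0 and 1 + λ + β/√(ab) − α(a+b)/2 = 0 has a unique solution (a, b) with 0 < a < b and |λ|·((√a − √b)/(√a + √b))² < 1. -/
open Real

noncomputable def fgigG (α β t : ℝ) : ℝ := α*t - β/t + (α*t^2 - β)/(α*t^2 + β)

lemma fgigG_mono (α β : ℝ) (hα : 0 < α) (hβ : 0 < β) :
    StrictMonoOn (fgigG α β) (Set.Ioi 0) := by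
  intro x hx y hy hxy
  simp only [Set.mem_Ioi] at hx hy
  have hdx : α*x^2 + β > 0 := by positivity
  have hdy : α*y^2 + β > 0 := by positivity
  have key : fgigG α β y - fgigG α β x
      = α*(y-x) + β*(y-x)/(x*y)
        + 2*β*α*(y^2-x^2)/((α*y^2+β)*(α*x^2+β)) := by
    unfold fgigG
    field_simp
    ring
  have h1 : α*(y-x) > 0 := by nlinarith
  have hyx : y - x > 0 := by linarith
  have h2 : β*(y-x)/(x*y) > 0 := by positivity
  have h3 : 2*β*α*(y^2-x^2)/((α*y^2+β)*(α*x^2+β)) > 0 := by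
    have : y^2 - x^2 > 0 := by nlinarith
    positivity
  linarith [key, h1, h2, h3]

lemma fgigG_contOn (α β : ℝ) (hα : 0 < α) (hβ : 0 < β) :
    ContinuousOn (fgigG α β) (Set.Ioi 0) := by
  intro x hx
  have hx0 : (x:ℝ) ≠ 0 := ne_of_gt hx
  have hd : α*x^2 + β ≠ 0 := by positivity
  apply ContinuousAt.continuousWithinAt
  unfold fgigG
  apply ContinuousAt.add
  · exact ((continuous_const.mul continuous_id).continuousAt).sub
      (ContinuousAt.div continuousAt_const continuousAt_id hx0)
  · exact ContinuousAt.div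
      (((continuous_const.mul (continuous_pow 2)).sub continuous_const).continuousAt)
      (((continuous_const.mul (continuous_pow 2)).add continuous_const).continuousAt) hd

lemma fgigG_root (l α β : ℝ) (hα : 0 < α) (hβ : 0 < β) :
    ∃ t : ℝ, 0 < t ∧ fgigG α β t = l := by
  set c : ℝ := α + 2 + |l| with hc_def
  have hc : 0 < c := by positivity
  set t₁ : ℝ := min 1 (β / c) with ht₁_def
  set t₂ : ℝ := max 1 ((2 + |l| + β) / α) with ht₂_def
  have ht₁ : 0 < t₁ := lt_min one_pos (by positivity)
  have ht₁1 : t₁ ≤ 1 := min_le_left _ _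
  have ht₂1 : (1:ℝ) ≤ t₂ := le_max_left _ _
  have ht₂ : 0 < t₂ := lt_of_lt_of_le one_pos ht₂1
  have ht₁₂ : t₁ ≤ t₂ := le_trans ht₁1 ht₂1
  have hbt₁ : c ≤ β / t₁ := by
    rw [le_div_iff₀ ht₁]
    have h : t₁ * c ≤ β := (le_div_iff₀ hc).mp (min_le_right 1 (β / c))
    linarith [h, mul_comm t₁ c]
  have hat₂ : 2 + |l| + β ≤ α * t₂ := by
    have h : 2 + |l| + β ≤ t₂ * α := (div_le_iff₀ hα).mp (le_max_right 1 ((2 + |l| + β) / α))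
    linarith [h, mul_comm t₂ α]
  have hbt₂ : β / t₂ ≤ β := div_le_self hβ.le ht₂1
  have hd₁ : (0:ℝ) < α * t₁^2 + β := by positivity
  have hd₂ : (0:ℝ) < α * t₂^2 + β := by positivity
  have hG₁ : fgigG α β t₁ ≤ l := by
    have h3 : (α * t₁^2 - β) / (α * t₁^2 + β) ≤ 1 := by
      rw [div_le_one hd₁]; linarith
    have : fgigG α β t₁ ≤ α * 1 - c + 1 := by
      unfold fgigG
      have : α * t₁ ≤ α * 1 := by nlinarith
      linarith
    have := neg_abs_le l
    simp only [hc_def] at *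
    linarith
  have hG₂ : l ≤ fgigG α β t₂ := by
    have h3 : -(1:ℝ) ≤ (α * t₂^2 - β) / (α * t₂^2 + β) := by
      rw [le_div_iff₀ hd₂]; nlinarith
    have : 2 + |l| + β - β - 1 ≤ fgigG α β t₂ := by
      unfold fgigG
      linarith
    have := le_abs_self l
    linarith
  have hsub : Set.Icc t₁ t₂ ⊆ Set.Ioi 0 := fun x hx => lt_of_lt_of_le ht₁ hx.1
  have := intermediate_value_Icc ht₁₂ ((fgigG_contOn α β hα hβ).mono hsub)
  obtain ⟨t, ht, hGt⟩ := this ⟨hG₁, hG₂⟩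
  exact ⟨t, lt_of_lt_of_le ht₁ ht.1, hGt⟩


theorem fgig_support_exists_unique (l α β : ℝ) (hα : 0 < α) (hβ : 0 < β) :
    ∃! p : ℝ × ℝ,
      (0 < p.1 ∧ p.1 < p.2 ∧
        |l| * ((Real.sqrt p.1 - Real.sqrt p.2) / (Real.sqrt p.1 + Real.sqrt p.2))^2 < 1) ∧
      1 - l + α * Real.sqrt (p.1 * p.2) - β * (p.1 + p.2) / (2 * p.1 * p.2) = 0 ∧
      1 + l + β / Real.sqrt (p.1 * p.2) - α * (p.1 + p.2) / 2 = 0 := by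
  obtain ⟨t, ht, hGt⟩ := fgigG_root l α β hα hβ
  have hl : l = α*t - β/t + (α*t^2 - β)/(α*t^2 + β) := hGt.symm
  have hden : (0:ℝ) < α*t^2 + β := by positivity
  set m : ℝ := t + 2*t^2/(α*t^2+β) with hm_def
  have hmt : t < m := by
    have : 0 < 2*t^2/(α*t^2+β) := by positivity
    simp only [hm_def]; linarith
  have hm : 0 < m := lt_trans ht hmt
  have hmt2 : t^2 < m^2 := by nlinarith
  set d : ℝ := Real.sqrt (m^2 - t^2) with hd_def
  have hd2 : d^2 = m^2 - t^2 := Real.sq_sqrt (by linarith)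
  have hd0 : 0 < d := Real.sqrt_pos.mpr (by linarith)
  have hdm : d < m := by nlinarith [hd2, mul_pos ht ht]
  set a : ℝ := m - d with ha_def
  set b : ℝ := m + d with hb_def
  have ha : 0 < a := by simp only [ha_def]; linarith
  have hab : a < b := by simp only [ha_def, hb_def]; linarith
  have hb : 0 < b := lt_trans ha hab
  have hsum : a + b = 2*m := by simp only [ha_def, hb_def]; ring
  have habprod : a * b = t^2 := by
    have : a * b = m^2 - d^2 := by simp only [ha_def, hb_def]; ring
    rw [this, hd2]; ring
  have hsqrtab : Real.sqrt (a*b) = t := by rw [habprod]; exact Real.sqrt_sq ht.le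
  have htne : t ≠ 0 := ne_of_gt ht
  clear_value m d a b
  -- the two equations for (a, b)
  have heq1 : 1 - l + α * Real.sqrt (a*b) - β*(a+b)/(2*a*b) = 0 := by
    rw [hsqrtab, hsum, show (2:ℝ)*a*b = 2*t^2 by rw [mul_assoc, habprod], hl, hm_def]
    field_simp
    ring
  have heq2 : 1 + l + β / Real.sqrt (a*b) - α*(a+b)/2 = 0 := by
    rw [hsqrtab, hsum, hl, hm_def]
    field_simp
    ring
  -- the |l| condition
  have hsa : Real.sqrt a ^ 2 = a := Real.sq_sqrt ha.le
  have hsb : Real.sqrt b ^ 2 = b := Real.sq_sqrt hb.le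
  have hsasb : Real.sqrt a * Real.sqrt b = t := by
    rw [← Real.sqrt_mul ha.le, habprod]; exact Real.sqrt_sq ht.le
  have hratio : ((Real.sqrt a - Real.sqrt b)/(Real.sqrt a + Real.sqrt b))^2
      = (m - t)/(m + t) := by
    rw [div_pow]
    have h1 : (Real.sqrt a - Real.sqrt b)^2 = 2*(m - t) := by
      linear_combination hsa + hsb - 2*hsasb + hsum
    have h2 : (Real.sqrt a + Real.sqrt b)^2 = 2*(m + t) := by
      linear_combination hsa + hsb + 2*hsasb + hsum
    rw [h1, h2, mul_div_mul_left _ _ (two_ne_zero)]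
  have hat2 : 0 < α*t^2 := by positivity
  have hq : 0 < α*t := by positivity
  have hr : 0 < β/t := by positivity
  have habs1 : |α*t - β/t| < α*t + β/t := abs_lt.mpr ⟨by linarith, by linarith⟩
  have habs2 : |(α*t^2 - β)/(α*t^2 + β)| ≤ 1 := by
    rw [abs_div, abs_of_pos hden, div_le_one hden]
    exact abs_le.mpr ⟨by linarith, by linarith⟩
  have hlabs : |l| < α*t + β/t + 1 := by
    have h := abs_add_le (α*t - β/t) ((α*t^2 - β)/(α*t^2 + β))
    rw [← hl] at h
    linarith
  have hcond : |l| * ((Real.sqrt a - Real.sqrt b)/(Real.sqrt a + Real.sqrt b))^2 < 1 := by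
    have key : (α*t + β/t + 1) * (m - t) = m + t := by
      rw [hm_def]; field_simp; ring
    have hmtpos : 0 < m - t := by linarith
    have hfin : |l| * (m - t) < m + t :=
      calc |l| * (m - t) < (α*t + β/t + 1) * (m - t) :=
            mul_lt_mul_of_pos_right hlabs hmtpos
        _ = m + t := key
    have hrw : |l| * ((m - t)/(m + t)) = (|l| * (m - t))/(m + t) := by ring
    rw [hratio, hrw, div_lt_one (by linarith : (0:ℝ) < m + t)]
    exact hfin
  refine ⟨(a, b), ⟨⟨ha, hab, hcond⟩, heq1, heq2⟩, ?_⟩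
  rintro ⟨a', b'⟩ ⟨⟨ha', hab', -⟩, he1, he2⟩
  dsimp only at ha' hab' he1 he2
  have hb' : 0 < b' := lt_trans ha' hab'
  set t' : ℝ := Real.sqrt (a'*b') with ht'_def
  have ht'0 : 0 < t' := Real.sqrt_pos.mpr (by positivity)
  have ht'ne : t' ≠ 0 := ne_of_gt ht'0
  have ht'2 : t'^2 = a'*b' := Real.sq_sqrt (by positivity)
  have h2ab : (2:ℝ)*a'*b' = 2*t'^2 := by rw [mul_assoc, ← ht'2]
  rw [h2ab] at he1
  have ht2ne : (2:ℝ)*t'^2 ≠ 0 := by positivity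
  have h1' : β*(a'+b')/(2*t'^2) = 1 - l + α*t' := by linarith [he1]
  have h1 : β*(a'+b') = (1 - l + α*t')*(2*t'^2) := by
    rw [← h1', div_mul_cancel₀ _ ht2ne]
  have h2' : α*(a'+b')/2 = 1 + l + β/t' := by linarith [he2]
  have h2 : α*(a'+b') = (1 + l + β/t')*2 := by
    rw [← h2', div_mul_cancel₀ _ (two_ne_zero)]
  have h2c : α*(a'+b')*t' = (1+l)*2*t' + 2*β := by
    rw [h2]; field_simp
  have hden' : α*t'^2 + β ≠ 0 := by positivity
  have hGoal : fgigG α β t' = l := by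
    unfold fgigG
    field_simp
    linear_combination (β/2) * h2c - (α*t'/2) * h1
  have ht't : t' = t :=
    (fgigG_mono α β hα hβ).injOn (Set.mem_Ioi.mpr ht'0) (Set.mem_Ioi.mpr ht)
      (hGoal.trans hGt.symm)
  have hm2 : α*(2*m) = (1 + l + β/t)*2 := by
    rw [hm_def, hl]; field_simp; ring
  have hsum' : a' + b' = a + b := by
    have : α*(a'+b') = α*(2*m) := by rw [h2, hm2, ht't]
    have := mul_left_cancel₀ (ne_of_gt hα) this
    rw [hsum]; linarith
  have hprod' : a' * b' = a * b := by rw [← ht'2, ht't, habprod]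
  have hdiffsq : (b' - a')^2 = (b - a)^2 := by
    linear_combination (a'+b'+a+b)*hsum' - 4*hprod'
  have hdiff : b' - a' = b - a := by
    have habs : |b' - a'| = |b - a| := by
      rw [← Real.sqrt_sq_eq_abs, ← Real.sqrt_sq_eq_abs, hdiffsq]
    rwa [abs_of_pos (by linarith), abs_of_pos (by linarith)] at habs
  simp only [Prod.mk.injEq]
  constructor <;> linarith
end

section
/- Let 0 < a < b satisfy |λ|·((√a − √b)/(√a + √b))² < 1 for some λ ∈ ℝ. Then α := (2/(√a − √b)²)·(1 + λ((√a − √b)/(√a + √b))²) and β := (2ab/(√a − √b)²)·(1 − λ((√a − √b)/(√a + √b))²) are both strictly positive, and (α, β) is the unique pair of positive reals satisfying 1 − λ + α√(ab) − β(a+b)/(2ab) = 0 and 1 + λ + β/√(ab) − α(a+b)/2 = 0. -/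
open Real

theorem fgig_params_from_support (l a b : ℝ) (ha : 0 < a) (hab : a < b)
    (hl : |l| * ((Real.sqrt a - Real.sqrt b) / (Real.sqrt a + Real.sqrt b))^2 < 1)
    (α β : ℝ)
    (hαdef : α = 2 / (Real.sqrt a - Real.sqrt b)^2 *
      (1 + l * ((Real.sqrt a - Real.sqrt b) / (Real.sqrt a + Real.sqrt b))^2))
    (hβdef : β = 2 * a * b / (Real.sqrt a - Real.sqrt b)^2 *
      (1 - l * ((Real.sqrt a - Real.sqrt b) / (Real.sqrt a + Real.sqrt b))^2)) :
    0 < α ∧ 0 < β ∧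
    (1 - l + α * Real.sqrt (a * b) - β * (a + b) / (2 * a * b) = 0 ∧
      1 + l + β / Real.sqrt (a * b) - α * (a + b) / 2 = 0) ∧
    ∀ α' β' : ℝ, 0 < α' → 0 < β' →
      1 - l + α' * Real.sqrt (a * b) - β' * (a + b) / (2 * a * b) = 0 →
      1 + l + β' / Real.sqrt (a * b) - α' * (a + b) / 2 = 0 →
      α' = α ∧ β' = β := by
  have hb : 0 < b := ha.trans hab
  have hab' : Real.sqrt (a * b) = Real.sqrt a * Real.sqrt b :=
    Real.sqrt_mul ha.le b
  obtain ⟨s, hsa⟩ : ∃ x, Real.sqrt a = x := ⟨_, rfl⟩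
  obtain ⟨t, hta⟩ : ∃ x, Real.sqrt b = x := ⟨_, rfl⟩
  have hs0 : 0 < s := hsa ▸ Real.sqrt_pos.mpr ha
  have ht0 : 0 < t := hta ▸ Real.sqrt_pos.mpr hb
  have hst : s < t := by rw [← hsa, ← hta]; exact Real.sqrt_lt_sqrt ha.le hab
  have ha2 : a = s^2 := by rw [← hsa]; exact (Real.sq_sqrt ha.le).symm
  have hb2 : b = t^2 := by rw [← hta]; exact (Real.sq_sqrt hb.le).symm
  rw [hsa, hta] at hl hαdef hβdef
  rw [hab', hsa, hta] at *
  rw [ha2, hb2] at hβdef ⊢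
  clear hab' ha2 hb2 hab ha hb hsa hta
  -- now purely in terms of s, t with 0 < s < t
  have hne : s - t ≠ 0 := by intro h; nlinarith
  have hne2 : s + t ≠ 0 := by positivity
  have hs : s ≠ 0 := ne_of_gt hs0
  have ht : t ≠ 0 := ne_of_gt ht0
  have hr0 : (0:ℝ) ≤ ((s - t) / (s + t))^2 := sq_nonneg _
  have hlr : |l * ((s - t) / (s + t))^2| < 1 := by
    rw [abs_mul, abs_of_nonneg hr0]; exact hl
  have hlr1 : l * ((s - t) / (s + t))^2 < 1 := lt_of_le_of_lt (le_abs_self _) hlr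
  have hlr2 : -1 < l * ((s - t) / (s + t))^2 := by
    have := neg_abs_le (l * ((s - t) / (s + t))^2); linarith
  have hα0 : 0 < α := by
    rw [hαdef]
    have h1 : (0:ℝ) < 2 / (s - t)^2 := by positivity
    have h2 : 0 < 1 + l * ((s - t) / (s + t))^2 := by linarith
    exact mul_pos h1 h2
  have hβ0 : 0 < β := by
    rw [hβdef]
    have h1 : (0:ℝ) < 2 * s^2 * t^2 / (s - t)^2 := by positivity
    have h2 : 0 < 1 - l * ((s - t) / (s + t))^2 := by linarith
    exact mul_pos h1 h2
  have hαval : α = 2*((s+t)^2 + l*(s-t)^2) / ((s-t)^2*(s+t)^2) := by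
    rw [hαdef]; field_simp
  have hβval : β = 2*s^2*t^2*((s+t)^2 - l*(s-t)^2) / ((s-t)^2*(s+t)^2) := by
    rw [hβdef]; field_simp
  refine ⟨hα0, hβ0, ⟨?_, ?_⟩, ?_⟩
  · rw [hαdef, hβdef]
    field_simp
    ring
  · rw [hαdef, hβdef]
    field_simp
    ring
  · intro α' β' hα' hβ' h1 h2
    field_simp at h1 h2
    have key1 : (α' * ((s-t)^2*(s+t)^2)) * (s*t) = (2*((s+t)^2 + l*(s-t)^2)) * (s*t) := by
      linear_combination (-2 : ℝ)*h1 - (s^2+t^2)*h2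
    have key1' := mul_right_cancel₀ (mul_ne_zero hs ht) key1
    have key2 : β' * ((s-t)^2*(s+t)^2) = 2*s^2*t^2*((s+t)^2 - l*(s-t)^2) := by
      linear_combination (-(s^2+t^2) : ℝ)*h1 - 2*s^2*t^2*h2
    constructor
    · rw [hαval, eq_div_iff (by positivity)]
      linear_combination key1'
    · rw [hβval, eq_div_iff (by positivity)]
      linear_combination key2
end

section
/- Suppose 0 < a < b, λ ∈ ℝ, and α, β > 0 satisfy 1 − λ + α√(ab) − β(a+b)/(2ab) = 0 and 1 + λ + β/√(ab) − α(a+b)/2 = 0. Then the pair (a', b') := (β/(αb), β/(αa)) satisfies the same system of equations with λ replaced by −λ, i.e. 1 + λ + α√(a'b') − β(a'+b')/(2a'b') = 0 and 1 − λ + β/√(a'b') − α(a'+b')/2 = 0. -/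
open Real

theorem fgig_support_sign_flip (l a b α β : ℝ) (ha : 0 < a) (hab : a < b)
    (hα : 0 < α) (hβ : 0 < β)
    (h1 : 1 - l + α * Real.sqrt (a * b) - β * (a + b) / (2 * a * b) = 0)
    (h2 : 1 + l + β / Real.sqrt (a * b) - α * (a + b) / 2 = 0) :
    1 + l + α * Real.sqrt (β / (α * b) * (β / (α * a))) -
      β * (β / (α * b) + β / (α * a)) / (2 * (β / (α * b)) * (β / (α * a))) = 0 ∧
    1 - l + β / Real.sqrt (β / (α * b) * (β / (α * a))) -
      α * (β / (α * b) + β / (α * a)) / 2 = 0 := by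
  have hb : 0 < b := ha.trans hab
  set s := Real.sqrt (a * b) with hs
  have hspos : 0 < s := Real.sqrt_pos.mpr (by positivity)
  have hs2 : s ^ 2 = a * b := Real.sq_sqrt (by positivity)
  have hkey : β / (α * b) * (β / (α * a)) = (β / (α * s)) ^ 2 := by
    field_simp
    ring_nf
    rw [hs2]; ring
  have hsqrt : Real.sqrt (β / (α * b) * (β / (α * a))) = β / (α * s) := by
    rw [hkey, Real.sqrt_sq (by positivity)]
  rw [hsqrt]
  have hane : a ≠ 0 := ha.ne'
  have hbne : b ≠ 0 := hb.ne'
  have hαne : α ≠ 0 := hα.ne'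
  have hβne : β ≠ 0 := hβ.ne'
  have hsne : s ≠ 0 := hspos.ne'
  constructor
  · have : α * (β / (α * s)) = β / s := by field_simp
    rw [this]
    have h3 : β * (β / (α * b) + β / (α * a)) / (2 * (β / (α * b)) * (β / (α * a)))
        = α * (a + b) / 2 := by field_simp
    rw [h3]; linarith [h2]
  · have h4 : β / (β / (α * s)) = α * s := by field_simp
    rw [h4]
    have h5 : α * (β / (α * b) + β / (α * a)) / 2 = β * (a + b) / (2 * a * b) := by
      field_simp
    rw [h5]; linarith [h1]
end

section
/- Let 0 < max{1, |λ|}·A < B, and define α, β, δ, η as in the factorized parametrization of the free GIG distribution. Then δ ≥ −√(α/(4β)), with equality if and only if λ = 0. -/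
set_option maxHeartbeats 1000000


open Real

theorem fgig_delta_lower_bound (l A B α β δ η : ℝ)
    (h1 : 0 < max 1 |l| * A) (h2 : max 1 |l| * A < B)
    (hα : α = 2 / A * (1 + l * A / B))
    (hβ : β = (B - A)^2 / (8 * A) * (1 - l * A / B))
    (hδ : δ = -(2 * (B + l * A)) / (B * (B - A)))
    (hη : η = 2 * B / (A * (B - l * A))) :
    -Real.sqrt (α / (4 * β)) ≤ δ ∧ (δ = -Real.sqrt (α / (4 * β)) ↔ l = 0) := by
  have hmax1 : (1:ℝ) ≤ max 1 |l| := le_max_left _ _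
  have hmaxl : |l| ≤ max 1 |l| := le_max_right _ _
  have hA : 0 < A := by nlinarith
  have hAB : A < B := by nlinarith
  have hlAB : |l| * A < B := by nlinarith
  have hlabs : |l * A| < B := by
    rw [abs_mul, abs_of_pos hA]; exact hlAB
  have hlA1 : l * A < B := lt_of_le_of_lt (le_abs_self _) hlabs
  have hlA2 : -B < l * A := neg_lt_of_abs_lt hlabs
  have hB : 0 < B := by linarith
  have hBmA : 0 < B - A := by linarith
  have hBplA : 0 < B + l * A := by linarith
  have hBmlA : 0 < B - l * A := by linarith
  have hAne : A ≠ 0 := ne_of_gt hA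
  have hBne : B ≠ 0 := ne_of_gt hB
  have hBmAne : B - A ≠ 0 := ne_of_gt hBmA
  have hBmlAne : B - l * A ≠ 0 := ne_of_gt hBmlA
  have hβpos : 0 < β := by
    rw [hβ]
    have h3 : 0 < 1 - l * A / B := by
      rw [sub_pos, div_lt_one hB]; exact hlA1
    exact mul_pos (div_pos (pow_pos hBmA 2) (by linarith)) h3
  have hβne : β ≠ 0 := ne_of_gt hβpos
  have hkey : α / (4 * β) =
      δ ^ 2 + 4 * (B + l * A) * (l * A) ^ 2 / ((B - A) ^ 2 * B ^ 2 * (B - l * A)) := by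
    rw [hα, hβ, hδ]
    have h' : B - A * l ≠ 0 := by rw [mul_comm]; exact hBmlAne
    field_simp
    ring
  have hE : 0 ≤ 4 * (B + l * A) * (l * A) ^ 2 / ((B - A) ^ 2 * B ^ 2 * (B - l * A)) := by
    positivity
  have hδle : δ ≤ 0 := by
    rw [hδ]
    apply div_nonpos_of_nonpos_of_nonneg <;> nlinarith
  have hsq : δ ^ 2 ≤ α / (4 * β) := by linarith
  have hmain : -Real.sqrt (α / (4 * β)) ≤ δ := by
    have h := Real.sqrt_le_sqrt hsq
    rw [Real.sqrt_sq_eq_abs, abs_of_nonpos hδle] at h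
    linarith
  refine ⟨hmain, ?_, ?_⟩
  · intro heq
    have hnn : 0 ≤ α / (4 * β) := le_trans (sq_nonneg δ) hsq
    have h4 : Real.sqrt (α / (4 * β)) = -δ := by linarith
    have h5 : α / (4 * β) = δ ^ 2 := by
      rw [← Real.sq_sqrt hnn, h4]; ring
    have h6 : 4 * (B + l * A) * (l * A) ^ 2 / ((B - A) ^ 2 * B ^ 2 * (B - l * A)) = 0 := by
      linarith
    have hden : 0 < (B - A) ^ 2 * B ^ 2 * (B - l * A) := by positivity
    rw [div_eq_zero_iff] at h6
    rcases h6 with h6 | h6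
    · rcases mul_eq_zero.mp h6 with h | h
      · nlinarith
      · have hlA0 : l * A = 0 := by
          have := sq_eq_zero_iff.mp h
          exact this
        rcases mul_eq_zero.mp hlA0 with h' | h'
        · exact h'
        · exact absurd h' hAne
    · exact absurd h6 (ne_of_gt hden)
  · intro hl
    subst hl
    have h5 : α / (4 * β) = δ ^ 2 := by
      rw [hkey]; ring
    rw [h5, Real.sqrt_sq_eq_abs, abs_of_nonpos hδle, neg_neg]
end

section
/- Let A, B > 0 with max{1, |λ|}·A < B and λ < 0. Then 8λ²A³ − 9λ²A²B + B³ ≤ 0 if and only if λ ≤ −B^{3/2}/(A√(9B − 8A)). -/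
open Real

theorem fgig_fsd_criterion (l A B : ℝ)
    (h1 : 0 < max 1 |l| * A) (h2 : max 1 |l| * A < B) (hl : l < 0) :
    8 * l^2 * A^3 - 9 * l^2 * A^2 * B + B^3 ≤ 0 ↔
      l ≤ -(B ^ ((3:ℝ)/2)) / (A * Real.sqrt (9 * B - 8 * A)) := by
  have hm : (1:ℝ) ≤ max 1 |l| := le_max_left _ _
  have hA : 0 < A := by nlinarith
  have hAB : A < B := by nlinarith
  have hB : 0 < B := lt_trans hA hAB
  have h9 : 0 < 9 * B - 8 * A := by linarith
  have hs : 0 < Real.sqrt (9 * B - 8 * A) := Real.sqrt_pos.mpr h9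
  have hC : 0 < A * Real.sqrt (9 * B - 8 * A) := mul_pos hA hs
  have hsq : (Real.sqrt (9 * B - 8 * A)) ^ 2 = 9 * B - 8 * A := Real.sq_sqrt h9.le
  have hBr : B ^ ((3:ℝ)/2) = Real.sqrt (B ^ 3) := by
    rw [Real.sqrt_eq_rpow, ← Real.rpow_natCast B 3, ← Real.rpow_mul hB.le]
    norm_num
  rw [hBr, le_div_iff₀ hC]
  rw [show l * (A * Real.sqrt (9 * B - 8 * A)) ≤ -Real.sqrt (B ^ 3) ↔
      Real.sqrt (B ^ 3) ≤ -l * (A * Real.sqrt (9 * B - 8 * A)) by constructor <;> intro h <;> linarith]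
  have hnl : 0 ≤ -l := by linarith
  constructor
  · intro h
    have hle : B ^ 3 ≤ (-l * (A * Real.sqrt (9 * B - 8 * A))) ^ 2 := by
      have : (-l * (A * Real.sqrt (9 * B - 8 * A))) ^ 2
          = l ^ 2 * A ^ 2 * (9 * B - 8 * A) := by rw [mul_pow, mul_pow, hsq]; ring
      nlinarith [hsq]
    calc Real.sqrt (B ^ 3) ≤ Real.sqrt ((-l * (A * Real.sqrt (9 * B - 8 * A))) ^ 2) :=
          Real.sqrt_le_sqrt hle
      _ = -l * (A * Real.sqrt (9 * B - 8 * A)) := Real.sqrt_sq (by positivity)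
  · intro h
    have h' : B ^ 3 ≤ (-l * (A * Real.sqrt (9 * B - 8 * A))) ^ 2 := by
      have := Real.sq_sqrt (by positivity : (0:ℝ) ≤ B ^ 3)
      nlinarith [Real.sqrt_nonneg (B ^ 3)]
    nlinarith [hsq]
end

section
/- Let α, λ > 0. The quartic polynomial q(c) = αc⁴ − (1+λ)c³ + (1−λ)c − α has exactly one root in the interval (−1, 0), and no other root in (−∞, 0). -/
open Real

theorem fgig_quartic_root (α l : ℝ) (hα : 0 < α) (hl : 0 < l) :
    (∃! c : ℝ, c ∈ Set.Ioo (-1 : ℝ) 0 ∧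
      α * c^4 - (1 + l) * c^3 + (1 - l) * c - α = 0) ∧
    (∀ c : ℝ, c < 0 → α * c^4 - (1 + l) * c^3 + (1 - l) * c - α = 0 →
      c ∈ Set.Ioo (-1 : ℝ) 0) := by
  set f : ℝ → ℝ := fun c => α * c^4 - (1 + l) * c^3 + (1 - l) * c - α with hf
  have hcont : ContinuousOn f (Set.Icc (-1 : ℝ) 0) := by fun_prop
  have hle : (-1 : ℝ) ≤ 0 := by norm_num
  have hsub := intermediate_value_Ioo' hle hcont
  have h0 : (0 : ℝ) ∈ Set.Ioo (f 0) (f (-1)) := by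
    simp only [hf]
    constructor <;> norm_num <;> linarith
  obtain ⟨c, hc, hfc⟩ := hsub h0
  -- uniqueness lemma
  have uniq : ∀ a b : ℝ, a ∈ Set.Ioo (-1 : ℝ) 0 → b ∈ Set.Ioo (-1 : ℝ) 0 →
      f a = 0 → f b = 0 → a = b := by
    intro a b ⟨ha1, ha0⟩ ⟨hb1, hb0⟩ hfa hfb
    simp only [hf] at hfa hfb
    have hNa : l * (a^3 + a) = (a^2 - 1) * (α * (a^2 + 1) - a) := by nlinarith [hfa]
    have hNb : l * (b^3 + b) = (b^2 - 1) * (α * (b^2 + 1) - b) := by nlinarith [hfb]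
    have hab : 0 < a * b := mul_pos_of_neg_of_neg ha0 hb0
    have hQ : 0 < α * (1 + a*b) * (1 + a^2) * (1 + b^2) - 2 * (a*b) * (a + b) := by
      have h1 : 0 < 1 + a*b := by linarith
      have h2 : 0 < (1 + a^2) * (1 + b^2) := by positivity
      have h3 : 0 < α * (1 + a*b) * (1 + a^2) * (1 + b^2) := by
        have := mul_pos (mul_pos hα h1) h2
        nlinarith [this]
      have h4 : a + b < 0 := by linarith
      nlinarith [mul_pos hab (neg_pos.mpr h4)]
    have key : (a - b) * (α * (1 + a*b) * (1 + a^2) * (1 + b^2) - 2 * (a*b) * (a + b)) = 0 := by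
      have : ((a^2 - 1) * (α * (a^2 + 1) - a)) * (b^3 + b)
          - ((b^2 - 1) * (α * (b^2 + 1) - b)) * (a^3 + a) = 0 := by
        rw [← hNa, ← hNb]; ring
      nlinarith [this]
    have := mul_eq_zero.mp key
    rcases this with h | h
    · linarith
    · linarith
  have hbound : ∀ c : ℝ, c < 0 → f c = 0 → c ∈ Set.Ioo (-1 : ℝ) 0 := by
    intro x hx hfx
    refine ⟨?_, hx⟩
    by_contra h
    push_neg at h
    simp only [hf] at hfx
    have hN : l * (x^3 + x) = (x^2 - 1) * (α * (x^2 + 1) - x) := by nlinarith [hfx]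
    have h1 : x^3 + x ≤ -2 := by nlinarith
    have h2 : 0 ≤ (x^2 - 1) * (α * (x^2 + 1) - x) := by
      have : (1:ℝ) ≤ x^2 := by nlinarith
      have : 0 < α * (x^2 + 1) - x := by nlinarith
      nlinarith
    nlinarith
  exact ⟨⟨c, ⟨hc, hfc⟩, fun y ⟨hy, hfy⟩ => uniq y c hy hc hfy hfc⟩, hbound⟩
end

section
/- Let c ∈ (−1, 0), α > 0, and suppose α₁ satisfies 1/(1+c²)² ≤ α₁ ≤ 1/(1+c²). Define β₁ = (1 − c²)/(α₁c²(1+c²)) − 1/c². Then −1 ≤ β₁ ≤ −c². Moreover, for every integer n ≥ 2, with p = (1 − c⁴)/(c(α − c + αc²)), one has 1 + c²β₁ⁿ + c²pα₁ ≥ α(1 − c⁴)/(α − c + αc²) > 0. -/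
open Real

set_option maxHeartbeats 1000000

theorem fgig_induction_bounds (α c α₁ β₁ p : ℝ) (hα : 0 < α)
    (hc : c ∈ Set.Ioo (-1 : ℝ) 0)
    (hα₁ : 1 / (1 + c^2)^2 ≤ α₁ ∧ α₁ ≤ 1 / (1 + c^2))
    (hβ₁ : β₁ = (1 - c^2) / (α₁ * c^2 * (1 + c^2)) - 1 / c^2)
    (hp : p = (1 - c^4) / (c * (α - c + α * c^2))) :
    (-1 ≤ β₁ ∧ β₁ ≤ -c^2) ∧
    ∀ n : ℕ, 2 ≤ n →
      α * (1 - c^4) / (α - c + α * c^2) ≤ 1 + c^2 * β₁^n + c^2 * p * α₁ ∧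
      0 < α * (1 - c^4) / (α - c + α * c^2) := by
  obtain ⟨hc1, hc2⟩ := hc
  have hcne : c ≠ 0 := ne_of_lt hc2
  have hc2pos : 0 < c^2 := by positivity
  have hc2lt : c^2 < 1 := by nlinarith
  have h1c : 0 < 1 + c^2 := by positivity
  have ha1 : 1 ≤ α₁ * (1 + c^2)^2 := by
    have := hα₁.1
    rw [div_le_iff₀ (by positivity)] at this
    linarith
  have ha2 : α₁ * (1 + c^2) ≤ 1 := by
    have := hα₁.2
    rw [le_div_iff₀ (by positivity)] at this
    linarith
  have hα₁pos : 0 < α₁ := by nlinarith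
  have hα₁ne : α₁ ≠ 0 := ne_of_gt hα₁pos
  have h1cne : (1 + c^2) ≠ 0 := ne_of_gt h1c
  have hE : β₁ * (α₁ * c^2 * (1 + c^2)) = (1 - c^2) - α₁ * (1 + c^2) := by
    rw [hβ₁]; field_simp
  have hApos : 0 < α₁ * c^2 * (1 + c^2) := by positivity
  have hβlow : -1 ≤ β₁ := by nlinarith [mul_nonneg (sub_nonneg.2 ha2) (by nlinarith : (0:ℝ) ≤ 1 - c^2)]
  have hβhigh : β₁ ≤ -c^2 := by nlinarith [mul_nonneg (sub_nonneg.2 ha1) (by nlinarith : (0:ℝ) ≤ 1 - c^2)]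
  refine ⟨⟨hβlow, hβhigh⟩, ?_⟩
  intro n hn
  have hD : 0 < α - c + α * c^2 := by nlinarith
  have hpe : p * (c * (α - c + α * c^2)) = 1 - c^4 := by
    rw [hp]; field_simp
    exact mul_div_cancel_right₀ _ (ne_of_gt (by linarith [hD]))
  have habs : |β₁| ≤ 1 := abs_le.2 ⟨hβlow, by nlinarith⟩
  have hpn : -1 ≤ β₁ ^ n := by
    have h1 : |β₁ ^ n| ≤ 1 := by
      rw [abs_pow]; exact pow_le_one₀ (abs_nonneg _) habs
    have h2 := neg_abs_le (β₁ ^ n)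
    linarith
  have hterm : c^2 * p * α₁ * (α - c + α * c^2) = c * α₁ * (1 - c^4) := by
    linear_combination c * α₁ * hpe
  have key : 0 ≤ (-c) * (1 - c^2) * (1 - α₁ * (1 + c^2)) :=
    mul_nonneg (mul_nonneg (by linarith) (by nlinarith)) (by linarith)
  constructor
  · rw [div_le_iff₀ hD]
    have h1 : 0 ≤ c^2 * (1 + β₁ ^ n) * (α - c + α * c^2) :=
      mul_nonneg (mul_nonneg hc2pos.le (by linarith)) hD.le
    linarith [hterm, key, h1]
  · have : 0 < α * ((1 - c^2) * (1 + c^2)) := mul_pos hα (mul_pos (by linarith) h1c)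
    exact div_pos (by nlinarith) hD
end
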